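/- Let K be a field and let (z_m)_{m∈ℤ} be nonzero elements satisfying the alternating rank-2 recurrence z_{m+1} z_{m-1} = z_m² + 1 if m is even and z_{m+1} z_{m-1} = z_m + 1 if m is odd. Then the sequence is periodic with period 6: z_{m+6} = z_m for all m. -/
import Mathlib

/-- Pure algebra: six steps of the B₂ recurrence return to the start. -/
lemma b2_key {K : Type*} [Field K] (x0 x1 x2 x3 x4 x5 x6 x7 : K)
    (h0 : x0 ≠ 0) (h1 : x1 ≠ 0) (h2 : x2 ≠ 0) (h3 : x3 ≠ 0) (h4 : x4 ≠ 0)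
    (h5 : x5 ≠ 0)
    (E1 : x2 * x0 = x1 + 1)
    (E2 : x3 * x1 = x2 ^ 2 + 1)
    (E3 : x4 * x2 = x3 + 1)
    (E4 : x5 * x3 = x4 ^ 2 + 1)
    (E5 : x6 * x4 = x5 + 1)
    (E6 : x7 * x5 = x6 ^ 2 + 1) :
    x6 = x0 ∧ x7 = x1 := by
  have hne1 : x1 + 1 ≠ 0 := E1 ▸ mul_ne_zero h2 h0
  have hA : x3 * x1 * x0 ^ 2 = (x1 + 1) ^ 2 + x0 ^ 2 := by
    linear_combination x0 ^ 2 * E2 + (x2 * x0 + x1 + 1) * E1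
  have hB' : (x1 + 1) * (x4 * x1 * x0) = (x1 + 1) * (x1 + 1 + x0 ^ 2) := by
    linear_combination (x1 * x0 ^ 2) * E3 - (x4 * x1 * x0) * E1 + hA
  have hB : x4 * x1 * x0 = x1 + 1 + x0 ^ 2 := mul_left_cancel₀ hne1 hB'
  have hne3 : x3 * x1 * x0 ^ 2 ≠ 0 :=
    mul_ne_zero (mul_ne_zero h3 h1) (pow_ne_zero 2 h0)
  have hC' : (x3 * x1 * x0 ^ 2) * (x5 * x1) = (x3 * x1 * x0 ^ 2) * (x0 ^ 2 + 1) := by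
    linear_combination (x1 ^ 2 * x0 ^ 2) * E4 +
      (x4 * x1 * x0 + x1 + 1 + x0 ^ 2) * hB - (x0 ^ 2 + 1) * hA
  have hC : x5 * x1 = x0 ^ 2 + 1 := mul_left_cancel₀ hne3 hC'
  have hne4 : x4 * x1 * x0 ≠ 0 := mul_ne_zero (mul_ne_zero h4 h1) h0
  have hD' : (x4 * x1 * x0) * x6 = (x4 * x1 * x0) * x0 := by
    linear_combination (x1 * x0) * E5 + x0 * hC - x0 * hB
  have hD : x6 = x0 := mul_left_cancel₀ hne4 hD'
  have hE' : x5 * x7 = x5 * x1 := by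
    linear_combination E6 + (x6 + x0) * hD - hC
  exact ⟨hD, mul_left_cancel₀ h5 hE'⟩

/-- Period `6` for the rank-2 cluster recurrence of type `B₂ = C₂`. -/
theorem stmt_9 (K : Type*) [Field K] (z : ℤ → K)
    (hz : ∀ m : ℤ, z m ≠ 0)
    (heven : ∀ m : ℤ, Even m → z (m + 1) * z (m - 1) = z m ^ 2 + 1)
    (hodd : ∀ m : ℤ, Odd m → z (m + 1) * z (m - 1) = z m + 1) :
    ∀ m : ℤ, z (m + 6) = z m := by
  intro m
  rcases Int.even_or_odd m with hm | hm
  · obtain ⟨k, hk⟩ := hm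
    have E1 : z (m + 2) * z m = z (m + 1) + 1 := by
      have h := hodd (m + 1) ⟨k, by omega⟩
      rwa [show m + 1 + 1 = m + 2 by ring, show m + 1 - 1 = m by ring] at h
    have E2 : z (m + 3) * z (m + 1) = z (m + 2) ^ 2 + 1 := by
      have h := heven (m + 2) ⟨k + 1, by omega⟩
      rwa [show m + 2 + 1 = m + 3 by ring, show m + 2 - 1 = m + 1 by ring] at h
    have E3 : z (m + 4) * z (m + 2) = z (m + 3) + 1 := by
      have h := hodd (m + 3) ⟨k + 1, by omega⟩
      rwa [show m + 3 + 1 = m + 4 by ring, show m + 3 - 1 = m + 2 by ring] at h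
    have E4 : z (m + 5) * z (m + 3) = z (m + 4) ^ 2 + 1 := by
      have h := heven (m + 4) ⟨k + 2, by omega⟩
      rwa [show m + 4 + 1 = m + 5 by ring, show m + 4 - 1 = m + 3 by ring] at h
    have E5 : z (m + 6) * z (m + 4) = z (m + 5) + 1 := by
      have h := hodd (m + 5) ⟨k + 2, by omega⟩
      rwa [show m + 5 + 1 = m + 6 by ring, show m + 5 - 1 = m + 4 by ring] at h
    have E6 : z (m + 7) * z (m + 5) = z (m + 6) ^ 2 + 1 := by
      have h := heven (m + 6) ⟨k + 3, by omega⟩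
      rwa [show m + 6 + 1 = m + 7 by ring, show m + 6 - 1 = m + 5 by ring] at h
    exact (b2_key (z m) (z (m + 1)) (z (m + 2)) (z (m + 3)) (z (m + 4))
      (z (m + 5)) (z (m + 6)) (z (m + 7)) (hz m) (hz (m + 1)) (hz (m + 2))
      (hz (m + 3)) (hz (m + 4)) (hz (m + 5)) E1 E2 E3 E4 E5 E6).1
  · obtain ⟨k, hk⟩ := hm
    have E1 : z (m + 1) * z (m - 1) = z m + 1 := hodd m ⟨k, hk⟩
    have E2 : z (m + 2) * z m = z (m + 1) ^ 2 + 1 := by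
      have h := heven (m + 1) ⟨k + 1, by omega⟩
      rwa [show m + 1 + 1 = m + 2 by ring, show m + 1 - 1 = m by ring] at h
    have E3 : z (m + 3) * z (m + 1) = z (m + 2) + 1 := by
      have h := hodd (m + 2) ⟨k + 1, by omega⟩
      rwa [show m + 2 + 1 = m + 3 by ring, show m + 2 - 1 = m + 1 by ring] at h
    have E4 : z (m + 4) * z (m + 2) = z (m + 3) ^ 2 + 1 := by
      have h := heven (m + 3) ⟨k + 2, by omega⟩
      rwa [show m + 3 + 1 = m + 4 by ring, show m + 3 - 1 = m + 2 by ring] at h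
    have E5 : z (m + 5) * z (m + 3) = z (m + 4) + 1 := by
      have h := hodd (m + 4) ⟨k + 2, by omega⟩
      rwa [show m + 4 + 1 = m + 5 by ring, show m + 4 - 1 = m + 3 by ring] at h
    have E6 : z (m + 6) * z (m + 4) = z (m + 5) ^ 2 + 1 := by
      have h := heven (m + 5) ⟨k + 3, by omega⟩
      rwa [show m + 5 + 1 = m + 6 by ring, show m + 5 - 1 = m + 4 by ring] at h
    exact (b2_key (z (m - 1)) (z m) (z (m + 1)) (z (m + 2)) (z (m + 3))
      (z (m + 4)) (z (m + 5)) (z (m + 6)) (hz (m - 1)) (hz m) (hz (m + 1))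
      (hz (m + 2)) (hz (m + 3)) (hz (m + 4)) E1 E2 E3 E4 E5 E6).2
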